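/- Let φ = c₁ ∧ … ∧ c_k be a 3CNF formula over variables x₁,…,x_n in which each variable occurs at most once in each clause, and let E'_φ = (C₁ | … | C_k)^{[0,k−1]} where C_i = (a_{ij₁} | … | a_{ij_p})⁺ with x_{j₁},…,x_{j_p} the variables used by clause c_i, over the alphabet {a_{ij} | clause c_i uses x_j or ¬x_j}. Then for every unordered word w over this alphabet: w ∈ L(E'_φ) if and only if there exists i ∈ {1,…,k} such that none of the symbols occurring in C_i occurs in w. -/

import Mathlib

set_option autoImplicit false

universe u v w

/-- An unordered word over an alphabet `σ`: a multiset over `σ`,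
viewed as a function giving the number of occurrences of each symbol. -/
def UWord (σ : Type u) : Type u := σ → ℕ

/-- The empty unordered word `ε`. -/
def UWord.zero {σ : Type u} : UWord σ := fun _ => 0

/-- Unordered concatenation (multiset union) of two unordered words. -/
def UWord.add {σ : Type u} (w₁ w₂ : UWord σ) : UWord σ := fun a => w₁ a + w₂ a

/-- The unordered word consisting of a single occurrence of `a`. -/
def UWord.single {σ : Type u} [DecidableEq σ] (a : σ) : UWord σ :=
  fun b => if b = a then 1 else 0

/-- Unordered concatenation of a list of unordered words. -/
def listSum {σ : Type u} (l : List (UWord σ)) : UWord σ := l.foldr UWord.add UWord.zero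

/-- Unordered regular expressions (UREs):
`E ::= ε | a | E* | (E|E) | (E||E)`. -/
inductive URE (σ : Type u) : Type u where
  | eps : URE σ
  | sym : σ → URE σ
  | star : URE σ → URE σ
  | alt : URE σ → URE σ → URE σ
  | conc : URE σ → URE σ → URE σ

/-- The language of unordered words defined by a URE. -/
def URE.lang {σ : Type u} [DecidableEq σ] : URE σ → Set (UWord σ)
  | .eps => {UWord.zero}
  | .sym a => {UWord.single a}
  | .star E => {w | ∃ l : List (UWord σ), (∀ x ∈ l, x ∈ URE.lang E) ∧ w = listSum l}
  | .alt E₁ E₂ => URE.lang E₁ ∪ URE.lang E₂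
  | .conc E₁ E₂ => {w | ∃ w₁ ∈ URE.lang E₁, ∃ w₂ ∈ URE.lang E₂, w = w₁.add w₂}

/-- The macro `E? = E | ε`. -/
def URE.opt {σ : Type u} (E : URE σ) : URE σ := URE.alt E URE.eps

/-- The macro `E⁺ = E || E*`. -/
def URE.plus {σ : Type u} (E : URE σ) : URE σ := URE.conc E (URE.star E)

/-- Unordered concatenation `E₁ || ⋯ || E_k` of a list of UREs. -/
def URE.concList {σ : Type u} (l : List (URE σ)) : URE σ := l.foldr URE.conc URE.eps

/-- Disjunction `E₁ | ⋯ | E_k` of a (nonempty) list of UREs. -/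
def URE.altList {σ : Type u} : List (URE σ) → URE σ
  | [] => URE.eps
  | [E] => E
  | E :: F :: rest => URE.alt E (URE.altList (F :: rest))

/-- The language of the interval multiplicity `E^[lo,hi]` (finite bounds):
unordered concatenations of between `lo` and `hi` words of `L(E)`. -/
def URE.langIter {σ : Type u} [DecidableEq σ] (E : URE σ) (lo hi : ℕ) : Set (UWord σ) :=
  {w | ∃ l : List (UWord σ),
      (∀ x ∈ l, x ∈ URE.lang E) ∧ lo ≤ l.length ∧ l.length ≤ hi ∧ w = listSum l}

/- The alphabet `{a_{ij}}`: the pair `(i, j) : Fin k × Fin n` is the symbol `a_{ij}`.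
The 3CNF formula `φ = c₁ ∧ … ∧ c_k` over variables `x₁,…,x_n` is given by its sets of
literals `lits i` (a literal is a variable together with a sign). -/

/-- The URE `a_{ij}`. -/
def asym (k n : ℕ) (i : Fin k) (j : Fin n) : URE (Fin k × Fin n) := URE.sym (i, j)

/-- The clause `c_i` uses the variable `x_j` (positively or negatively). -/
def usesVar {k n : ℕ} (lits : Fin k → Finset (Fin n × Bool)) (i : Fin k) (j : Fin n) :
    Prop :=
  (j, true) ∈ lits i ∨ (j, false) ∈ lits i

/-- `X_j = ((a_{t₁j} || … || a_{t_l j}) | (a_{f₁j} || … || a_{f_m j}))` where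
`c_{t₁},…,c_{t_l}` are the clauses using the literal `x_j` and `c_{f₁},…,c_{f_m}`
the clauses using `¬x_j`. -/
def X10 {k n : ℕ} (lits : Fin k → Finset (Fin n × Bool)) (j : Fin n) :
    URE (Fin k × Fin n) :=
  URE.alt
    (URE.concList (((List.finRange k).filter (fun i => (j, true) ∈ lits i)).map
      (fun i => asym k n i j)))
    (URE.concList (((List.finRange k).filter (fun i => (j, false) ∈ lits i)).map
      (fun i => asym k n i j)))

/-- `E_φ = X₁ || … || X_n`. -/
def E10 {k n : ℕ} (lits : Fin k → Finset (Fin n × Bool)) : URE (Fin k × Fin n) :=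
  URE.concList ((List.finRange n).map (X10 lits))

/-- `C_i = (a_{ij₁} | … | a_{ij_p})⁺` where `x_{j₁},…,x_{j_p}` are the variables used
by the clause `c_i`. -/
def C10 {k n : ℕ} (lits : Fin k → Finset (Fin n × Bool)) (i : Fin k) :
    URE (Fin k × Fin n) :=
  URE.plus (URE.altList
    (((List.finRange n).filter (fun j => (j, true) ∈ lits i ∨ (j, false) ∈ lits i)).map
      (fun j => asym k n i j)))

/-- `L(E'_φ)` where `E'_φ = (C₁ | … | C_k)^[0,k−1]`. -/
def E10'lang {k n : ℕ} (lits : Fin k → Finset (Fin n × Bool)) :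
    Set (UWord (Fin k × Fin n)) :=
  URE.langIter (URE.altList ((List.finRange k).map (C10 lits))) 0 (k - 1)

/-! ### Auxiliary lemmas -/

section Aux

set_option linter.unusedSectionVars false

variable {σ : Type u} [DecidableEq σ]

lemma listSum_apply (l : List (UWord σ)) (x : σ) :
    listSum l x = (l.map (fun u => u x)).sum := by
  induction l with
  | nil => rfl
  | cons a t ih =>
    show a x + listSum t x = _
    simp [ih]

lemma apply_le_listSum {l : List (UWord σ)} {x : UWord σ} (hx : x ∈ l) (y : σ) :
    x y ≤ listSum l y := by
  induction l with
  | nil => simp at hx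
  | cons a t ih =>
    rcases List.mem_cons.1 hx with rfl | h
    · exact Nat.le_add_right _ _
    · exact le_trans (ih h) (Nat.le_add_left _ _)

lemma exists_of_listSum_ne_zero {l : List (UWord σ)} {y : σ}
    (h : listSum l y ≠ 0) : ∃ x ∈ l, x y ≠ 0 := by
  induction l with
  | nil => exact absurd rfl h
  | cons a t ih =>
    have h' : a y + listSum t y ≠ 0 := h
    rcases Nat.eq_zero_or_pos (a y) with h0 | h0
    · rw [h0, Nat.zero_add] at h'
      obtain ⟨x, hx, hxy⟩ := ih h'
      exact ⟨x, List.mem_cons_of_mem _ hx, hxy⟩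
    · exact ⟨a, List.mem_cons_self, by omega⟩

lemma mem_altList_lang {l : List (URE σ)} (hl : l ≠ []) (w : UWord σ) :
    w ∈ (URE.altList l).lang ↔ ∃ E ∈ l, w ∈ E.lang := by
  induction l with
  | nil => exact absurd rfl hl
  | cons E t ih =>
    cases t with
    | nil => simp [URE.altList]
    | cons F r =>
      have h2 := ih (by simp)
      constructor
      · rintro (h | h)
        · exact ⟨E, List.mem_cons_self, h⟩
        · obtain ⟨G, hG, hw⟩ := h2.1 h
          exact ⟨G, List.mem_cons_of_mem _ hG, hw⟩
      · rintro ⟨G, hG, hw⟩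
        rcases List.mem_cons.1 hG with rfl | hG
        · exact Or.inl hw
        · exact Or.inr (h2.2 ⟨G, hG, hw⟩)

lemma mem_plus_lang (E : URE σ) (w : UWord σ) :
    w ∈ (URE.plus E).lang ↔
      ∃ l : List (UWord σ), (∀ x ∈ l, x ∈ E.lang) ∧ l ≠ [] ∧ w = listSum l := by
  constructor
  · rintro ⟨w₁, h₁, w₂, ⟨l, hl, rfl⟩, rfl⟩
    refine ⟨w₁ :: l, ?_, by simp, rfl⟩
    intro x hx
    rcases List.mem_cons.1 hx with rfl | hx
    exacts [h₁, hl x hx]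
  · rintro ⟨l, hl, hne, rfl⟩
    cases l with
    | nil => exact absurd rfl hne
    | cons a t =>
      exact ⟨a, hl a (List.mem_cons_self), listSum t,
        ⟨t, fun x hx => hl x (List.mem_cons_of_mem _ hx), rfl⟩, rfl⟩

lemma sum_flatMap_nat {α : Type v} (l : List α) (f : α → List ℕ) :
    (l.flatMap f).sum = (l.map (fun a => (f a).sum)).sum := by
  induction l with
  | nil => rfl
  | cons a t ih => simp [ih]

end Aux

/-- Characterization of the language of `C_i`. -/
lemma C10_mem {k n : ℕ} (lits : Fin k → Finset (Fin n × Bool))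
    (hne : ∀ i : Fin k, (lits i).Nonempty) (i : Fin k) (w : UWord (Fin k × Fin n)) :
    w ∈ (C10 lits i).lang ↔
      (∃ y, w y ≠ 0) ∧ ∀ i' j', w (i', j') ≠ 0 → i' = i ∧ usesVar lits i j' := by
  have hlst : (((List.finRange n).filter
      (fun j => (j, true) ∈ lits i ∨ (j, false) ∈ lits i)).map
        (fun j => asym k n i j)) ≠ [] := by
    obtain ⟨⟨j, s⟩, hjs⟩ := hne i
    have hj : j ∈ (List.finRange n).filter
        (fun j => (j, true) ∈ lits i ∨ (j, false) ∈ lits i) := by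
      rw [List.mem_filter]
      refine ⟨List.mem_finRange j, ?_⟩
      cases s
      · simp only [decide_eq_true_eq]; exact Or.inr hjs
      · simp only [decide_eq_true_eq]; exact Or.inl hjs
    exact List.ne_nil_of_mem (List.mem_map_of_mem hj)
  have hsym : ∀ x : UWord (Fin k × Fin n),
      x ∈ (URE.altList (((List.finRange n).filter
        (fun j => (j, true) ∈ lits i ∨ (j, false) ∈ lits i)).map
          (fun j => asym k n i j))).lang ↔
      ∃ j, usesVar lits i j ∧ x = UWord.single (i, j) := by
    intro x
    rw [mem_altList_lang hlst]
    constructor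
    · rintro ⟨E, hE, hx⟩
      obtain ⟨j, hj, rfl⟩ := List.mem_map.1 hE
      rw [List.mem_filter] at hj
      have : usesVar lits i j := by
        have := hj.2; simp only [decide_eq_true_eq] at this; exact this
      exact ⟨j, this, hx⟩
    · rintro ⟨j, hj, rfl⟩
      refine ⟨asym k n i j, List.mem_map_of_mem ?_, rfl⟩
      rw [List.mem_filter]
      exact ⟨List.mem_finRange j, by simp only [decide_eq_true_eq]; exact hj⟩
  rw [C10, mem_plus_lang]
  constructor
  · rintro ⟨l, hl, hne', rfl⟩
    constructor
    · cases l with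
      | nil => exact absurd rfl hne'
      | cons a t =>
        obtain ⟨j, _, rfl⟩ := (hsym a).1 (hl a (List.mem_cons_self))
        refine ⟨(i, j), fun h0 => ?_⟩
        have := apply_le_listSum ((List.mem_cons_self : UWord.single (i, j) ∈ UWord.single (i, j) :: t)) (i, j)
        rw [h0] at this
        simp [UWord.single] at this
    · intro i' j' hne''
      obtain ⟨x, hx, hxy⟩ := exists_of_listSum_ne_zero hne''
      obtain ⟨j, hj, rfl⟩ := (hsym x).1 (hl x hx)
      have : (i', j') = (i, j) := by
        by_contra hc
        simp [UWord.single, hc] at hxy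
      obtain ⟨h1, h2⟩ := Prod.mk.injEq .. ▸ this
      simp only [Prod.mk.injEq] at this
      exact ⟨this.1, this.2 ▸ hj⟩
  · rintro ⟨⟨y, hy⟩, hsupp⟩
    refine ⟨(List.finRange n).flatMap
      (fun j => List.replicate (w (i, j)) (UWord.single (i, j))), ?_, ?_, ?_⟩
    · intro x hx
      obtain ⟨j, _, hx⟩ := List.mem_flatMap.1 hx
      have hcnt : w (i, j) ≠ 0 := (List.mem_replicate.1 hx).1
      have hxeq : x = UWord.single (i, j) := (List.mem_replicate.1 hx).2
      subst hxeq
      exact (hsym _).2 ⟨j, (hsupp i j hcnt).2, rfl⟩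
    · obtain ⟨i', j'⟩ := y
      obtain ⟨rfl, huse⟩ := hsupp i' j' hy
      refine List.ne_nil_of_mem (a := UWord.single (i', j'))
        (List.mem_flatMap.2 ⟨j', List.mem_finRange j', ?_⟩)
      rw [List.mem_replicate]
      exact ⟨hy, rfl⟩
    · funext z
      obtain ⟨i₀, j₀⟩ := z
      rw [listSum_apply, List.map_flatMap, sum_flatMap_nat]
      have hmap : ∀ j : Fin n,
          ((List.replicate (w (i, j)) (UWord.single (i, j))).map
            (fun u => u (i₀, j₀))).sum = w (i, j) * UWord.single (i, j) (i₀, j₀) := by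
        intro j
        rw [List.map_replicate, List.sum_replicate, smul_eq_mul]
      simp only [hmap]
      rw [← List.sum_toFinset _ (List.nodup_finRange n), List.toFinset_finRange]
      by_cases hi : i₀ = i
      · subst hi
        have : ∀ j : Fin n,
            w (i₀, j) * UWord.single (i₀, j) (i₀, j₀) = if j₀ = j then w (i₀, j) else 0 := by
          intro j
          simp only [UWord.single, Prod.mk.injEq, true_and]
          by_cases h : j₀ = j <;> simp [h]
        simp only [this]
        rw [Finset.sum_ite_eq]
        simp
      · have h0 : w (i₀, j₀) = 0 := by
          by_contra hc
          exact hi (hsupp i₀ j₀ hc).1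
        rw [h0]
        refine (Finset.sum_eq_zero fun j _ => ?_).symm
        simp [UWord.single, hi]

/-- For a 3CNF formula `φ` in which each variable occurs at most once
in each clause, and for every unordered word `w` over the alphabet
`{a_{ij} | clause c_i uses x_j or ¬x_j}`:  `w ∈ L(E'_φ)` if and only if there exists
`i ∈ {1,…,k}` such that none of the symbols occurring in `C_i` occurs in `w`. -/
theorem statement11 (k n : ℕ) (hk : 0 < k) (lits : Fin k → Finset (Fin n × Bool))
    (h3 : ∀ i : Fin k, (lits i).card = 3)
    (honce : ∀ (i : Fin k) (j : Fin n) (s s' : Bool),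
        (j, s) ∈ lits i → (j, s') ∈ lits i → s = s')
    (w : UWord (Fin k × Fin n))
    (hw : ∀ (i : Fin k) (j : Fin n), w (i, j) ≠ 0 → usesVar lits i j) :
    w ∈ E10'lang lits ↔
      (∃ i : Fin k, ∀ j : Fin n, usesVar lits i j → w (i, j) = 0) := by
  classical
  have hne : ∀ i : Fin k, (lits i).Nonempty := fun i =>
    Finset.card_pos.1 (by rw [h3 i]; norm_num)
  have hmapne : ((List.finRange k).map (C10 lits)) ≠ [] := by
    exact List.ne_nil_of_mem (List.mem_map_of_mem (List.mem_finRange (⟨0, hk⟩ : Fin k)))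
  simp only [E10'lang, URE.langIter, Set.mem_setOf_eq]
  constructor
  · rintro ⟨l, hl, -, hlen, rfl⟩
    by_contra hcon
    push_neg at hcon
    have hx : ∀ x ∈ l, ∃ r : Fin k,
        ∀ i' j', x (i', j') ≠ 0 → i' = r ∧ usesVar lits r j' := by
      intro x hxl
      obtain ⟨E, hE, hxE⟩ := (mem_altList_lang hmapne x).1 (hl x hxl)
      obtain ⟨r, -, rfl⟩ := List.mem_map.1 hE
      exact ⟨r, ((C10_mem lits hne r x).1 hxE).2⟩
    have hwit : ∀ i : Fin k, ∃ x, x ∈ l ∧ ∃ j, x (i, j) ≠ 0 := by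
      intro i
      obtain ⟨j, hj, hw0⟩ := hcon i
      obtain ⟨x, hxl, hxy⟩ := exists_of_listSum_ne_zero hw0
      exact ⟨x, hxl, j, hxy⟩
    choose F hFl j hFj using hwit
    have hinj : Function.Injective F := by
      intro i i' h
      obtain ⟨r, hsupp⟩ := hx (F i) (hFl i)
      have h1 := (hsupp i (j i) (hFj i)).1
      have h2 := (hsupp i' (j i') (by rw [h]; exact hFj i')).1
      exact h1.trans h2.symm
    have hkl : k ≤ l.length := by
      have h1 : (Finset.univ : Finset (Fin k)).card ≤ l.toFinset.card :=
        Finset.card_le_card_of_injOn F (fun i _ => List.mem_toFinset.2 (hFl i))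
          (fun a _ b _ h => hinj h)
      have h2 := List.toFinset_card_le l
      simp only [Finset.card_univ, Fintype.card_fin] at h1
      omega
    omega
  · rintro ⟨i, hi⟩
    have hrow : ∀ j, w (i, j) = 0 := fun j => by
      by_contra hc; exact hc (hi j (hw i j hc))
    classical
    set p : Fin k → Bool := fun i' => decide (∃ j, w (i', j) ≠ 0) with hp
    set L : List (Fin k) := (List.finRange k).filter p with hL
    have hnd : L.Nodup := (List.nodup_finRange k).filter p
    refine ⟨L.map (fun i' => fun y => if y.1 = i' then w y else 0), ?_, Nat.zero_le _, ?_, ?_⟩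
    · intro x hxl
      obtain ⟨i', hi', rfl⟩ := List.mem_map.1 hxl
      rw [hL, List.mem_filter] at hi'
      have hex : ∃ j, w (i', j) ≠ 0 := of_decide_eq_true hi'.2
      refine (mem_altList_lang hmapne _).2 ?_
      refine ⟨C10 lits i', List.mem_map_of_mem (List.mem_finRange i'), ?_⟩
      refine (C10_mem lits hne i' _).2 ?_
      constructor
      · obtain ⟨j, hj⟩ := hex
        exact ⟨(i', j), by simpa using hj⟩
      · rintro a b hab
        by_cases h : a = i'
        · subst h
          simp only [if_pos rfl] at hab
          exact ⟨rfl, hw a b hab⟩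
        · rw [if_neg h] at hab
          exact absurd rfl hab
    · have hiL : i ∉ L := by
        intro hmem
        rw [hL, List.mem_filter] at hmem
        obtain ⟨j, hj⟩ := of_decide_eq_true hmem.2
        exact hj (hrow j)
      have hsub : L.toFinset ⊆ Finset.univ.erase i := by
        intro a ha
        refine Finset.mem_erase.2 ⟨?_, Finset.mem_univ a⟩
        intro h; rw [h] at ha; exact hiL (List.mem_toFinset.1 ha)
      calc (L.map (fun i' => fun y : Fin k × Fin n => if y.1 = i' then w y else 0)).length
          = L.toFinset.card := by rw [List.length_map, List.toFinset_card_of_nodup hnd]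
        _ ≤ (Finset.univ.erase i).card := Finset.card_le_card hsub
        _ = k - 1 := by
            rw [Finset.card_erase_of_mem (Finset.mem_univ i), Finset.card_univ,
              Fintype.card_fin]
    · funext y
      obtain ⟨i₀, j₀⟩ := y
      rw [listSum_apply]
      refine Eq.trans ?_ (congrArg List.sum List.map_map).symm
      have hcomp : ((fun u : UWord (Fin k × Fin n) => u (i₀, j₀)) ∘
          (fun i' => fun y : Fin k × Fin n => if y.1 = i' then w y else 0))
          = fun i' => if i₀ = i' then w (i₀, j₀) else 0 := rfl
      rw [hcomp, ← List.sum_toFinset _ hnd]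
      have hTF : L.toFinset = Finset.univ.filter (fun i' => p i') := by
        rw [hL, List.toFinset_filter, List.toFinset_finRange]
      rw [hTF, Finset.sum_ite_eq]
      by_cases hmem : i₀ ∈ Finset.univ.filter (fun i' => p i')
      · rw [if_pos hmem]
      · rw [if_neg hmem]
        rw [Finset.mem_filter] at hmem
        have : ¬ (∃ j, w (i₀, j) ≠ 0) := by
          intro hex
          exact hmem ⟨Finset.mem_univ i₀, decide_eq_true hex⟩
        by_contra hc
        exact this ⟨j₀, fun h => hc (h ▸ rfl)⟩
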